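/- Let f_1,…,f_M and g_1,…,g_N be continuous functions from the positive reals to the positive reals. Then the following two conditions are equivalent: (a) for every γ > 0 there exists δ > 0 such that f_j(γ x) = δ f_j(x) for all x > 0 and all j = 1,…,M, and g_i(x/γ) = δ g_i(x) for all x > 0 and all i = 1,…,N; (b) there exist a real number ρ and positive constants α_1,…,α_M, β_1,…,β_N such that f_j(x) = α_j x^ρ for all x > 0 and all j, and g_i(x) = β_i x^{-ρ} for all x > 0 and all i. -/

import Mathlib

theorem mult_power_aux (D : ℝ → ℝ) (hcont : ContinuousOn D (Set.Ioi 0))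
    (hpos : ∀ x : ℝ, 0 < x → 0 < D x)
    (hmul : ∀ x y : ℝ, 0 < x → 0 < y → D (x * y) = D x * D y) :
    ∃ ρ : ℝ, ∀ x : ℝ, 0 < x → D x = x ^ ρ := by
  set h : ℝ → ℝ := fun t => Real.log (D (Real.exp t)) with hh
  have hDe : ∀ t, 0 < D (Real.exp t) := fun t => hpos _ (Real.exp_pos t)
  have hadd : ∀ s t, h (s + t) = h s + h t := by
    intro s t
    simp only [hh, Real.exp_add, hmul _ _ (Real.exp_pos s) (Real.exp_pos t),
      Real.log_mul (hDe s).ne' (hDe t).ne']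
  have hcont' : Continuous h := by
    have h1 : Continuous (fun t => D (Real.exp t)) := by
      apply hcont.comp_continuous Real.continuous_exp
      intro t; exact Real.exp_pos t
    refine continuous_iff_continuousAt.2 fun t => ?_
    have h2 : ContinuousAt (Real.log ∘ fun s => D (Real.exp s)) t :=
      ContinuousAt.comp (Real.continuousAt_log (hDe t).ne') h1.continuousAt
    exact h2
  let H : ℝ →+ ℝ := AddMonoidHom.mk' h hadd
  have hlin : ∀ t : ℝ, h t = t * h 1 := by
    intro t
    have := (H.toRealLinearMap hcont').map_smul t (1 : ℝ)
    simp only [smul_eq_mul, mul_one] at this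
    exact this
  refine ⟨h 1, fun x hx => ?_⟩
  have : D x = Real.exp (h (Real.log x)) := by
    simp [hh, Real.exp_log hx, Real.exp_log (hpos x hx)]
  rw [this, hlin, Real.rpow_def_of_pos hx]

theorem stmt4 {N M : ℕ}
    (f : Fin M → ℝ → ℝ) (g : Fin N → ℝ → ℝ)
    (hfcont : ∀ j, ContinuousOn (f j) (Set.Ioi (0 : ℝ)))
    (hgcont : ∀ i, ContinuousOn (g i) (Set.Ioi (0 : ℝ)))
    (hfpos : ∀ j x, 0 < x → 0 < f j x)
    (hgpos : ∀ i x, 0 < x → 0 < g i x) :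
    (∀ γ : ℝ, 0 < γ → ∃ δ : ℝ, 0 < δ ∧
        (∀ j, ∀ x : ℝ, 0 < x → f j (γ * x) = δ * f j x) ∧
        (∀ i, ∀ x : ℝ, 0 < x → g i (x / γ) = δ * g i x))
    ↔ (∃ (ρ : ℝ) (α : Fin M → ℝ) (β : Fin N → ℝ),
        (∀ j, 0 < α j) ∧ (∀ i, 0 < β i) ∧
        (∀ j, ∀ x : ℝ, 0 < x → f j x = α j * x ^ ρ) ∧
        (∀ i, ∀ x : ℝ, 0 < x → g i x = β i * x ^ (-ρ))) := by
  constructor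
  · intro hyp
    choose δ hδpos hδf hδg using hyp
    set D : ℝ → ℝ := fun γ => if h : 0 < γ then δ γ h else 1 with hD
    have hDpos : ∀ γ : ℝ, 0 < γ → 0 < D γ := by
      intro γ hγ; simp only [hD, dif_pos hγ]; exact hδpos γ hγ
    have hDf : ∀ j, ∀ γ x : ℝ, 0 < γ → 0 < x → f j (γ * x) = D γ * f j x := by
      intro j γ x hγ hx; simp only [hD, dif_pos hγ]; exact hδf γ hγ j x hx
    have hDg : ∀ i, ∀ γ x : ℝ, 0 < γ → 0 < x → g i (x / γ) = D γ * g i x := by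
      intro i γ x hγ hx; simp only [hD, dif_pos hγ]; exact hδg γ hγ i x hx
    -- common finishing step, given D x = x ^ ρ on positives
    have finish : ∀ ρ : ℝ, (∀ x : ℝ, 0 < x → D x = x ^ ρ) →
        (∃ (ρ : ℝ) (α : Fin M → ℝ) (β : Fin N → ℝ),
        (∀ j, 0 < α j) ∧ (∀ i, 0 < β i) ∧
        (∀ j, ∀ x : ℝ, 0 < x → f j x = α j * x ^ ρ) ∧
        (∀ i, ∀ x : ℝ, 0 < x → g i x = β i * x ^ (-ρ))) := by
      intro ρ hDρ
      refine ⟨ρ, fun j => f j 1, fun i => g i 1,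
        fun j => hfpos j 1 one_pos, fun i => hgpos i 1 one_pos, ?_, ?_⟩
      · intro j x hx
        have := hDf j x 1 hx one_pos
        rw [mul_one] at this
        rw [this, hDρ x hx, mul_comm]
      · intro i x hx
        have hxinv : 0 < x⁻¹ := inv_pos.2 hx
        have := hDg i x⁻¹ 1 hxinv one_pos
        rw [one_div, inv_inv] at this
        rw [this, hDρ _ hxinv, Real.inv_rpow hx.le, ← Real.rpow_neg hx.le, mul_comm]
    by_cases hM : Nonempty (Fin M)
    · obtain ⟨j0⟩ := hM
      have hDeq : ∀ γ : ℝ, 0 < γ → D γ = f j0 γ / f j0 1 := by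
        intro γ hγ
        have := hDf j0 γ 1 hγ one_pos
        rw [mul_one] at this
        rw [this, mul_div_assoc, div_self (hfpos j0 1 one_pos).ne', mul_one]
      have hcont : ContinuousOn D (Set.Ioi 0) := by
        refine ContinuousOn.congr ((hfcont j0).div_const (f j0 1)) ?_
        intro γ hγ; exact hDeq γ hγ
      have hmul : ∀ x y : ℝ, 0 < x → 0 < y → D (x * y) = D x * D y := by
        intro x y hx hy
        have h1 : f j0 (x * y) = D (x * y) * f j0 1 := by
          have := hDf j0 (x * y) 1 (mul_pos hx hy) one_pos
          rwa [mul_one] at this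
        have h2 : f j0 (x * y) = D x * (D y * f j0 1) := by
          have hy1 : f j0 y = D y * f j0 1 := by
            have := hDf j0 y 1 hy one_pos; rwa [mul_one] at this
          rw [← hy1]; exact hDf j0 x y hx hy
        have h3 := h1.symm.trans h2
        have hne := (hfpos j0 1 one_pos).ne'
        have h4 : D (x * y) * f j0 1 = (D x * D y) * f j0 1 := by rw [h3]; ring
        exact mul_right_cancel₀ hne h4
      obtain ⟨ρ, hρ⟩ := mult_power_aux D hcont hDpos hmul
      exact finish ρ hρ
    · by_cases hN : Nonempty (Fin N)
      · obtain ⟨i0⟩ := hN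
        have hDeq : ∀ γ : ℝ, 0 < γ → D γ = g i0 γ⁻¹ / g i0 1 := by
          intro γ hγ
          have := hDg i0 γ 1 hγ one_pos
          rw [one_div] at this
          rw [this, mul_div_assoc, div_self (hgpos i0 1 one_pos).ne', mul_one]
        have hcont : ContinuousOn D (Set.Ioi 0) := by
          refine ContinuousOn.congr ?_ fun γ hγ => hDeq γ hγ
          apply ContinuousOn.div_const
          refine (hgcont i0).comp (continuousOn_inv₀.mono ?_) ?_
          · intro x hx; exact (ne_of_gt hx)
          · intro x hx; exact inv_pos.2 (Set.mem_Ioi.mp hx)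
        have hmul : ∀ x y : ℝ, 0 < x → 0 < y → D (x * y) = D x * D y := by
          intro x y hx hy
          have h1 : g i0 (1 / (x * y)) = D (x * y) * g i0 1 := hDg i0 (x * y) 1 (mul_pos hx hy) one_pos
          have h2 : g i0 (1 / (x * y)) = D y * (D x * g i0 1) := by
            have hx1 : g i0 (1 / x) = D x * g i0 1 := hDg i0 x 1 hx one_pos
            have : g i0 ((1 / x) / y) = D y * g i0 (1 / x) :=
              hDg i0 y (1 / x) hy (by positivity)
            rw [hx1] at this
            rw [← this]
            ring_nf
          have h3 := h1.symm.trans h2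
          have hne := (hgpos i0 1 one_pos).ne'
          have h4 : D (x * y) * g i0 1 = (D x * D y) * g i0 1 := by rw [h3]; ring
          exact mul_right_cancel₀ hne h4
        obtain ⟨ρ, hρ⟩ := mult_power_aux D hcont hDpos hmul
        exact finish ρ hρ
      · refine ⟨0, fun _ => 1, fun _ => 1, fun _ => one_pos, fun _ => one_pos,
          fun j => absurd ⟨j⟩ hM, fun i => absurd ⟨i⟩ hN⟩
  · rintro ⟨ρ, α, β, hα, hβ, hf, hg⟩ γ hγ
    refine ⟨γ ^ ρ, Real.rpow_pos_of_pos hγ ρ, ?_, ?_⟩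
    · intro j x hx
      rw [hf j _ (mul_pos hγ hx), hf j x hx,
        Real.mul_rpow hγ.le hx.le]
      ring
    · intro i x hx
      rw [hg i _ (div_pos hx hγ), hg i x hx,
        Real.div_rpow hx.le hγ.le, Real.rpow_neg hγ.le, Real.rpow_neg hx.le]
      have := (Real.rpow_pos_of_pos hγ ρ).ne'
      field_simp
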